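/- Suppose M_{D,E,F} with diagonal A ∈ B(X), B ∈ B(Y) inner regular, C ∈ B(Z) is invertible for some D, E, F. Then N(B) × N(C) is linearly isomorphic to X/R(A) × Y/R(B). -/

import Mathlib

/-- An operator between (semi)normed spaces is invertible if it has a bounded two-sided
inverse. -/
def IsInvertibleCLM {U V : Type*} [SeminormedAddCommGroup U] [NormedSpace ℝ U]
    [SeminormedAddCommGroup V] [NormedSpace ℝ V] (T : U →L[ℝ] V) : Prop :=
  ∃ T' : V →L[ℝ] U, T'.comp T = ContinuousLinearMap.id ℝ U ∧
    T.comp T' = ContinuousLinearMap.id ℝ V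

/-- The `3 × 3` upper triangular operator matrix with diagonal `A, B, C` and strictly
upper entries `D, E, F`, acting on `X ⊕ Y ⊕ Z` by
`(x, y, z) ↦ (A x + D y + E z, B y + F z, C z)`. -/
def triM {X Y Z : Type*}
    [NormedAddCommGroup X] [NormedSpace ℝ X]
    [NormedAddCommGroup Y] [NormedSpace ℝ Y]
    [NormedAddCommGroup Z] [NormedSpace ℝ Z]
    (A : X →L[ℝ] X) (B : Y →L[ℝ] Y) (C : Z →L[ℝ] Z)
    (D : Y →L[ℝ] X) (E : Z →L[ℝ] X) (F : Z →L[ℝ] Y) :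
    (X × Y × Z) →L[ℝ] (X × Y × Z) :=
  (A.comp (ContinuousLinearMap.fst ℝ X (Y × Z)) +
      D.comp ((ContinuousLinearMap.fst ℝ Y Z).comp (ContinuousLinearMap.snd ℝ X (Y × Z))) +
      E.comp ((ContinuousLinearMap.snd ℝ Y Z).comp (ContinuousLinearMap.snd ℝ X (Y × Z)))).prod
    ((B.comp ((ContinuousLinearMap.fst ℝ Y Z).comp (ContinuousLinearMap.snd ℝ X (Y × Z))) +
        F.comp ((ContinuousLinearMap.snd ℝ Y Z).comp (ContinuousLinearMap.snd ℝ X (Y × Z)))).prod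
      (C.comp ((ContinuousLinearMap.snd ℝ Y Z).comp (ContinuousLinearMap.snd ℝ X (Y × Z)))))

set_option maxHeartbeats 2000000

/-- If some completion `M_{D,E,F}` with diagonal `A`, `B` inner regular, `C` is
invertible, then `N(B) × N(C) ≅ X/R(A) × Y/R(B)`. -/
theorem completion_necessary_iso {X Y Z : Type*}
    [NormedAddCommGroup X] [NormedSpace ℝ X] [CompleteSpace X]
    [NormedAddCommGroup Y] [NormedSpace ℝ Y] [CompleteSpace Y]
    [NormedAddCommGroup Z] [NormedSpace ℝ Z] [CompleteSpace Z]
    (A : X →L[ℝ] X) (B : Y →L[ℝ] Y) (C : Z →L[ℝ] Z)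
    (hB : ∃ B' : Y →L[ℝ] Y, B.comp (B'.comp B) = B)
    (h : ∃ (D : Y →L[ℝ] X) (E : Z →L[ℝ] X) (F : Z →L[ℝ] Y),
      IsInvertibleCLM (triM A B C D E F)) :
    Nonempty ((↥(LinearMap.ker (B : Y →ₗ[ℝ] Y)) × ↥(LinearMap.ker (C : Z →ₗ[ℝ] Z)))
      ≃L[ℝ] ((X ⧸ LinearMap.range (A : X →ₗ[ℝ] X)) × (Y ⧸ LinearMap.range (B : Y →ₗ[ℝ] Y)))) := by
  classical
  obtain ⟨B', hB'⟩ := hB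
  obtain ⟨D, E, F, T, hT1, hT2⟩ := h
  set M₀ : (X × Y × Z) →L[ℝ] (X × Y × Z) := triM A B C D E F with hM₀def
  have hTM : ∀ m, T (M₀ m) = m := fun m => DFunLike.congr_fun hT1 m
  have hMT : ∀ m, M₀ (T m) = m := fun m => DFunLike.congr_fun hT2 m
  have hBB'B : ∀ y, B (B' (B y)) = B y := fun y => DFunLike.congr_fun hB' y
  have hMapp : ∀ (x : X) (y : Y) (z : Z),
      M₀ (x, y, z) = (A x + D y + E z, B y + F z, C z) := fun _ _ _ => rfl
  have hMT1 : ∀ m : X × Y × Z, A (T m).1 + D (T m).2.1 + E (T m).2.2 = m.1 :=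
    fun m => congrArg Prod.fst (hMT m)
  have hMT2 : ∀ m : X × Y × Z, B (T m).2.1 + F (T m).2.2 = m.2.1 :=
    fun m => congrArg (fun p => p.2.1) (hMT m)
  have hMT3 : ∀ m : X × Y × Z, C (T m).2.2 = m.2.2 :=
    fun m => congrArg (fun p => p.2.2) (hMT m)
  have hMinj : ∀ (x : X) (y : Y) (z : Z),
      A x + D y + E z = 0 → B y + F z = 0 → C z = 0 → x = 0 ∧ y = 0 ∧ z = 0 := by
    intro x y z h1 h2 h3
    have h0 : M₀ (x, y, z) = 0 := by
      rw [hMapp, h1, h2, h3]; rfl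
    have hz := hTM (x, y, z)
    rw [h0, map_zero] at hz
    exact ⟨(congrArg Prod.fst hz).symm, (congrArg (fun p => p.2.1) hz).symm,
      (congrArg (fun p => p.2.2) hz).symm⟩
  -- R(A) is closed since A is bounded below
  have hAinv : ∀ x : X, T (A x, 0, 0) = (x, 0, 0) := by
    intro x
    have hx : M₀ (x, 0, 0) = (A x, 0, 0) := by rw [hMapp]; simp
    rw [← hx, hTM]
  have hAlb : ∀ x : X, ‖x‖ ≤ ‖T‖ * ‖A x‖ := by
    intro x
    have h1 : ‖((x, 0, 0) : X × Y × Z)‖ = ‖x‖ := by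
      simp [Prod.norm_def]
    have h2 : ‖((A x, 0, 0) : X × Y × Z)‖ = ‖A x‖ := by
      simp [Prod.norm_def]
    calc ‖x‖ = ‖((x, 0, 0) : X × Y × Z)‖ := h1.symm
      _ = ‖T (A x, 0, 0)‖ := by rw [hAinv]
      _ ≤ ‖T‖ * ‖((A x, 0, 0) : X × Y × Z)‖ := T.le_opNorm _
      _ = ‖T‖ * ‖A x‖ := by rw [h2]
  have hRAclosed : IsClosed ((LinearMap.range (A : X →ₗ[ℝ] X) : Submodule ℝ X) : Set X) := by
    have hal : AntilipschitzWith ‖T‖₊ A :=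
      ContinuousLinearMap.antilipschitz_of_bound A (fun x => by
        simpa using hAlb x)
    have hcr := hal.isClosed_range A.uniformContinuous
    rw [LinearMap.coe_range]
    exact hcr
  haveI : IsClosed ((LinearMap.range (A : X →ₗ[ℝ] X) : Submodule ℝ X) : Set X) := hRAclosed
  -- membership in range B
  have hRB : ∀ y : Y, y ∈ LinearMap.range (B : Y →ₗ[ℝ] Y) ↔ B (B' y) = y := by
    intro y
    constructor
    · rintro ⟨u, rfl⟩; exact hBB'B u
    · intro hy; exact ⟨B' y, hy⟩
  -- submodules
  set NB : Submodule ℝ Y := LinearMap.ker (B : Y →ₗ[ℝ] Y) with hNBdef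
  set NC : Submodule ℝ Z := LinearMap.ker (C : Z →ₗ[ℝ] Z) with hNCdef
  set P : Y →L[ℝ] Y := B.comp B' with hPdef
  set Y2 : Submodule ℝ Y := LinearMap.ker (P : Y →ₗ[ℝ] Y) with hY2def
  have hY2mem : ∀ y : Y, y ∈ Y2 ↔ B (B' y) = 0 := fun y => Iff.rfl
  set Kmap : Z →L[ℝ] Y × Z := (F - P.comp F).prod C with hKmapdef
  set K : Submodule ℝ Z := LinearMap.ker (Kmap : Z →ₗ[ℝ] Y × Z) with hKdef
  have hKmem : ∀ z : Z, z ∈ K ↔ (F z ∈ LinearMap.range (B : Y →ₗ[ℝ] Y) ∧ C z = 0) := by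
    intro z
    constructor
    · intro hz
      have hz' : Kmap z = 0 := hz
      have h1 : F z - B (B' (F z)) = 0 := congrArg Prod.fst hz'
      have h2 : C z = 0 := congrArg Prod.snd hz'
      exact ⟨(hRB (F z)).mpr (sub_eq_zero.mp h1).symm, h2⟩
    · rintro ⟨hr, hz⟩
      have h1 : F z - B (B' (F z)) = 0 := by
        rw [(hRB (F z)).mp hr]; exact sub_self _
      show Kmap z = 0
      have : Kmap z = (F z - B (B' (F z)), C z) := rfl
      rw [this, h1, hz]; rfl
  set Gmap : (Y × Z) →L[ℝ] Y × Z :=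
    (B.comp (ContinuousLinearMap.fst ℝ Y Z) + F.comp (ContinuousLinearMap.snd ℝ Y Z)).prod
      (C.comp (ContinuousLinearMap.snd ℝ Y Z)) with hGdef
  set W : Submodule ℝ (Y × Z) := LinearMap.ker (Gmap : (Y × Z) →ₗ[ℝ] Y × Z) with hWdef
  have hWmem : ∀ p : Y × Z, p ∈ W ↔ (B p.1 + F p.2 = 0 ∧ C p.2 = 0) := by
    intro p
    constructor
    · intro hp
      have hp' : Gmap p = 0 := hp
      exact ⟨congrArg Prod.fst hp', congrArg Prod.snd hp'⟩
    · rintro ⟨h1, h2⟩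
      show Gmap p = 0
      have : Gmap p = (B p.1 + F p.2, C p.2) := rfl
      rw [this, h1, h2]; rfl
  -- the map y ↦ y - B B' y, corestricted to Y2
  have hσmem : ∀ y : Y, y - B (B' y) ∈ Y2 := by
    intro y
    show B (B' (y - B (B' y))) = 0
    rw [map_sub, map_sub, hBB'B (B' y), sub_self]
  set σr : Y →L[ℝ] Y2 :=
    (ContinuousLinearMap.id ℝ Y - P).codRestrict Y2 (fun y => hσmem y) with hσdef
  have hσapp : ∀ y : Y, (σr y : Y) = y - B (B' y) := fun y => rfl
  -- ===== e5 : Y2 ≃L Y ⧸ R(B) =====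
  set mkB : Y →L[ℝ] (Y ⧸ LinearMap.range (B : Y →ₗ[ℝ] Y)) :=
    ⟨(LinearMap.range (B : Y →ₗ[ℝ] Y)).mkQ, ((LinearMap.range (B : Y →ₗ[ℝ] Y)).isOpenQuotientMap_mkQ).continuous⟩
    with hmkBdef
  set f5 : Y2 →L[ℝ] (Y ⧸ LinearMap.range (B : Y →ₗ[ℝ] Y)) := mkB.comp Y2.subtypeL with hf5def
  have hg5ker : LinearMap.range (B : Y →ₗ[ℝ] Y) ≤ LinearMap.ker (σr : Y →ₗ[ℝ] Y2) := by
    rintro y ⟨u, rfl⟩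
    have : (σr (B u) : Y) = 0 := by rw [hσapp, hBB'B u, sub_self]
    exact Subtype.ext this
  set g5lin : (Y ⧸ LinearMap.range (B : Y →ₗ[ℝ] Y)) →ₗ[ℝ] Y2 :=
    (LinearMap.range (B : Y →ₗ[ℝ] Y)).liftQ (σr : Y →ₗ[ℝ] Y2) hg5ker with hg5lindef
  have hg5cont : Continuous g5lin := by
    refine ((LinearMap.range (B : Y →ₗ[ℝ] Y)).isOpenQuotientMap_mkQ).continuous_comp_iff.mp ?_
    have : (g5lin ∘ (LinearMap.range (B : Y →ₗ[ℝ] Y)).mkQ) = σr := funext fun y => rfl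
    rw [this]
    exact σr.continuous
  set g5 : (Y ⧸ LinearMap.range (B : Y →ₗ[ℝ] Y)) →L[ℝ] Y2 := ⟨g5lin, hg5cont⟩ with hg5def
  have e5h1 : Function.LeftInverse g5 f5 := by
    rintro ⟨y, hy⟩
    apply Subtype.ext
    have hy' : B (B' y) = 0 := hy
    have : (g5 (f5 ⟨y, hy⟩) : Y) = y - B (B' y) := rfl
    rw [this, hy', sub_zero]
  have e5h2 : Function.RightInverse g5 f5 := by
    intro q
    obtain ⟨y, rfl⟩ := (LinearMap.range (B : Y →ₗ[ℝ] Y)).mkQ_surjective q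
    have h1 : f5 (g5 ((LinearMap.range (B : Y →ₗ[ℝ] Y)).mkQ y)) =
        (Submodule.Quotient.mk (y - B (B' y)) : Y ⧸ LinearMap.range (B : Y →ₗ[ℝ] Y)) := rfl
    have h2 : (LinearMap.range (B : Y →ₗ[ℝ] Y)).mkQ y = (Submodule.Quotient.mk y : Y ⧸ LinearMap.range (B : Y →ₗ[ℝ] Y)) := rfl
    rw [h1, h2, Submodule.Quotient.eq]
    simpa using Submodule.neg_mem _ ⟨B' y, rfl⟩
  set e5 : Y2 ≃L[ℝ] (Y ⧸ LinearMap.range (B : Y →ₗ[ℝ] Y)) :=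
    ContinuousLinearEquiv.equivOfInverse f5 g5 e5h1 e5h2 with he5def
  -- ===== e3 : NB × K ≃L W =====
  have hf3mem : ∀ p : ↥NB × ↥K,
      ((p.1 : Y) - B' (F (p.2 : Z)), (p.2 : Z)) ∈ W := by
    rintro ⟨⟨n, hn⟩, ⟨k, hk⟩⟩
    obtain ⟨hkr, hkc⟩ := (hKmem k).mp hk
    refine (hWmem _).mpr ⟨?_, hkc⟩
    have hBn : B n = 0 := hn
    show B (n - B' (F k)) + F k = 0
    rw [map_sub, hBn, (hRB (F k)).mp hkr, zero_sub, neg_add_cancel]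
  set u0 : ↥NB × ↥K →L[ℝ] Y × Z :=
    ((NB.subtypeL.comp (ContinuousLinearMap.fst ℝ ↥NB ↥K)) -
        ((B'.comp F).comp (K.subtypeL.comp (ContinuousLinearMap.snd ℝ ↥NB ↥K)))).prod
      (K.subtypeL.comp (ContinuousLinearMap.snd ℝ ↥NB ↥K)) with hu0def
  set f3 : ↥NB × ↥K →L[ℝ] ↥W := u0.codRestrict W (fun p => hf3mem p) with hf3def
  have hf3app : ∀ p : ↥NB × ↥K,
      (f3 p : Y × Z) = ((p.1 : Y) - B' (F (p.2 : Z)), (p.2 : Z)) := fun p => rfl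
  have hg3mem1 : ∀ w : ↥W, (w : Y × Z).1 - B' (B (w : Y × Z).1) ∈ NB := by
    intro w
    show B ((w : Y × Z).1 - B' (B (w : Y × Z).1)) = 0
    rw [map_sub, hBB'B, sub_self]
  have hg3mem2 : ∀ w : ↥W, (w : Y × Z).2 ∈ K := by
    intro w
    obtain ⟨h1, h2⟩ := (hWmem _).mp w.2
    refine (hKmem _).mpr ⟨⟨-(w : Y × Z).1, ?_⟩, h2⟩
    rw [map_neg, neg_eq_iff_add_eq_zero]
    exact h1
  set g3 : ↥W →L[ℝ] ↥NB × ↥K :=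
    (((ContinuousLinearMap.id ℝ Y - B'.comp B).comp
          ((ContinuousLinearMap.fst ℝ Y Z).comp W.subtypeL)).codRestrict NB
        (fun w => hg3mem1 w)).prod
      (((ContinuousLinearMap.snd ℝ Y Z).comp W.subtypeL).codRestrict K
        (fun w => hg3mem2 w)) with hg3def
  have hg3app : ∀ w : ↥W, g3 w =
      (⟨(w : Y × Z).1 - B' (B (w : Y × Z).1), hg3mem1 w⟩, ⟨(w : Y × Z).2, hg3mem2 w⟩) :=
    fun w => rfl
  have e3h1 : Function.LeftInverse g3 f3 := by
    rintro ⟨⟨n, hn⟩, ⟨k, hk⟩⟩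
    obtain ⟨hkr, hkc⟩ := (hKmem k).mp hk
    have hBn : B n = 0 := hn
    rw [hg3app]
    refine Prod.ext (Subtype.ext ?_) (Subtype.ext ?_)
    · show (f3 (⟨n, hn⟩, ⟨k, hk⟩) : Y × Z).1
        - B' (B (f3 (⟨n, hn⟩, ⟨k, hk⟩) : Y × Z).1) = n
      rw [hf3app]
      show (n - B' (F k)) - B' (B (n - B' (F k))) = n
      rw [map_sub, hBn, (hRB (F k)).mp hkr, zero_sub, map_neg, sub_neg_eq_add,
        sub_add_cancel]
    · show (f3 (⟨n, hn⟩, ⟨k, hk⟩) : Y × Z).2 = k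
      rw [hf3app]
  have e3h2 : Function.RightInverse g3 f3 := by
    intro w
    obtain ⟨h1, h2⟩ := (hWmem _).mp w.2
    apply Subtype.ext
    rw [hf3app, hg3app]
    show ((((w : Y × Z).1 - B' (B (w : Y × Z).1)) - B' (F (w : Y × Z).2)), (w : Y × Z).2)
      = (w : Y × Z)
    have : ((w : Y × Z).1 - B' (B (w : Y × Z).1)) - B' (F (w : Y × Z).2)
        = (w : Y × Z).1 - B' (B (w : Y × Z).1 + F (w : Y × Z).2) := by
      rw [map_add]; abel
    rw [this, h1, map_zero, sub_zero]
  set e3 : (↥NB × ↥K) ≃L[ℝ] ↥W :=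
    ContinuousLinearEquiv.equivOfInverse f3 g3 e3h1 e3h2 with he3def
  -- ===== e4 : W ≃L X ⧸ R(A) =====
  haveI : CompleteSpace ↥W := IsClosed.completeSpace_coe (hs := ContinuousLinearMap.isClosed_ker Gmap)
  set mkA : X →L[ℝ] (X ⧸ LinearMap.range (A : X →ₗ[ℝ] X)) :=
    ⟨(LinearMap.range (A : X →ₗ[ℝ] X)).mkQ, ((LinearMap.range (A : X →ₗ[ℝ] X)).isOpenQuotientMap_mkQ).continuous⟩
    with hmkAdef
  set f4 : ↥W →L[ℝ] (X ⧸ LinearMap.range (A : X →ₗ[ℝ] X)) :=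
    mkA.comp ((D.comp ((ContinuousLinearMap.fst ℝ Y Z).comp W.subtypeL)) +
      (E.comp ((ContinuousLinearMap.snd ℝ Y Z).comp W.subtypeL))) with hf4def
  have hf4app : ∀ w : ↥W, f4 w =
      (LinearMap.range (A : X →ₗ[ℝ] X)).mkQ (D (w : Y × Z).1 + E (w : Y × Z).2) := fun w => rfl
  have hf4inj : LinearMap.ker (f4 : ↥W →ₗ[ℝ] (X ⧸ LinearMap.range (A : X →ₗ[ℝ] X))) = ⊥ := by
    rw [Submodule.eq_bot_iff]
    intro w hw
    have hw0 : f4 w = 0 := hw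
    rw [hf4app] at hw0
    have hmem : D (w : Y × Z).1 + E (w : Y × Z).2 ∈ LinearMap.range (A : X →ₗ[ℝ] X) :=
      (Submodule.Quotient.mk_eq_zero _).mp hw0
    obtain ⟨x, hx⟩ := hmem
    obtain ⟨h1, h2⟩ := (hWmem _).mp w.2
    have hA : A (-x) + D (w : Y × Z).1 + E (w : Y × Z).2 = 0 := by
      rw [map_neg, show A x = _ from hx]; abel
    obtain ⟨-, hy, hz⟩ := hMinj (-x) (w : Y × Z).1 (w : Y × Z).2 hA h1 h2
    apply Subtype.ext
    rw [Prod.ext_iff]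
    exact ⟨hy, hz⟩
  have hf4surj : LinearMap.range (f4 : ↥W →ₗ[ℝ] (X ⧸ LinearMap.range (A : X →ₗ[ℝ] X))) = ⊤ := by
    rw [LinearMap.range_eq_top]
    intro q
    obtain ⟨x, rfl⟩ := (LinearMap.range (A : X →ₗ[ℝ] X)).mkQ_surjective q
    set m : X × Y × Z := T (x, 0, 0) with hm
    have h2 : B m.2.1 + F m.2.2 = 0 := hMT2 (x, 0, 0)
    have h3 : C m.2.2 = 0 := hMT3 (x, 0, 0)
    have h1 : A m.1 + D m.2.1 + E m.2.2 = x := hMT1 (x, 0, 0)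
    have hw : (m.2.1, m.2.2) ∈ W := (hWmem _).mpr ⟨h2, h3⟩
    refine ⟨⟨_, hw⟩, ?_⟩
    rw [ContinuousLinearMap.coe_coe, hf4app]
    show (Submodule.Quotient.mk (D m.2.1 + E m.2.2) : X ⧸ LinearMap.range (A : X →ₗ[ℝ] X))
      = Submodule.Quotient.mk x
    rw [Submodule.Quotient.eq]
    refine ⟨-m.1, ?_⟩
    rw [map_neg, ← h1]
    abel
  set e4 : ↥W ≃L[ℝ] (X ⧸ LinearMap.range (A : X →ₗ[ℝ] X)) :=
    ContinuousLinearEquiv.ofBijective f4 hf4inj hf4surj with he4def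
  -- ===== eC : NC ≃L K × Y2 =====
  set J : Y →L[ℝ] X × Y × Z :=
    (ContinuousLinearMap.inr ℝ X (Y × Z)).comp (ContinuousLinearMap.inl ℝ Y Z) with hJdef
  have hJapp : ∀ y : Y, J y = (0, y, 0) := fun y => rfl
  set ρ0 : Y →L[ℝ] Z :=
    (ContinuousLinearMap.snd ℝ Y Z).comp
      ((ContinuousLinearMap.snd ℝ X (Y × Z)).comp (T.comp J)) with hρ0def
  have hρ0app : ∀ y : Y, ρ0 y = (T (0, y, 0)).2.2 := fun y => rfl
  have hρ0mem : ∀ y : Y, ρ0 y ∈ NC := by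
    intro y
    show C (ρ0 y) = 0
    rw [hρ0app]
    exact hMT3 (0, y, 0)
  set ρ : Y →L[ℝ] ↥NC := ρ0.codRestrict NC (fun y => hρ0mem y) with hρdef
  set κ : ↥NC →L[ℝ] ↥Y2 := σr.comp (F.comp NC.subtypeL) with hκdef
  have hκapp : ∀ z : ↥NC, (κ z : Y) = F (z : Z) - B (B' (F (z : Z))) := fun z => rfl
  have htmem : ∀ z : ↥NC, (z : Z) - (ρ ((κ z : Y)) : Z) ∈ K := by
    intro z
    set y₀ : Y := (κ z : Y) with hy₀
    have hCz : C (z : Z) = 0 := z.2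
    have hCρ : C ((ρ y₀ : ↥NC) : Z) = 0 := (ρ y₀).2
    refine (hKmem _).mpr ⟨?_, by rw [map_sub, hCz, hCρ, sub_zero]⟩
    -- F (z - ρ y₀) = B (B' (F z) + v)
    have hv : B (T (0, y₀, 0)).2.1 + F (T (0, y₀, 0)).2.2 = y₀ := hMT2 (0, y₀, 0)
    refine ⟨B' (F (z : Z)) + (T (0, y₀, 0)).2.1, ?_⟩
    rw [map_add]
    have hρval : ((ρ y₀ : ↥NC) : Z) = (T (0, y₀, 0)).2.2 := rfl
    rw [map_sub, hρval]
    have hFw : F (T (0, y₀, 0)).2.2 = y₀ - B (T (0, y₀, 0)).2.1 :=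
      eq_sub_of_add_eq' hv
    rw [hFw, hy₀, hκapp]
    abel
  set t1 : ↥NC →L[ℝ] ↥K :=
    ((NC.subtypeL - (NC.subtypeL.comp (ρ.comp (Y2.subtypeL.comp κ)))).codRestrict K
      (fun z => htmem z)) with ht1def
  have ht1app : ∀ z : ↥NC, (t1 z : Z) = (z : Z) - (ρ ((κ z : Y)) : Z) := fun z => rfl
  set fC : ↥NC →L[ℝ] ↥K × ↥Y2 := t1.prod κ with hfCdef
  set inclKNC : ↥K →L[ℝ] ↥NC :=
    K.subtypeL.codRestrict NC (fun k => ((hKmem (k : Z)).mp k.2).2) with hincldef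
  set gC : ↥K × ↥Y2 →L[ℝ] ↥NC :=
    inclKNC.comp (ContinuousLinearMap.fst ℝ ↥K ↥Y2) +
      ρ.comp (Y2.subtypeL.comp (ContinuousLinearMap.snd ℝ ↥K ↥Y2)) with hgCdef
  have hgCapp : ∀ p : ↥K × ↥Y2, (gC p : Z) = (p.1 : Z) + (ρ ((p.2 : Y)) : Z) :=
    fun p => rfl
  have eCh1 : Function.LeftInverse gC fC := by
    intro z
    apply Subtype.ext
    rw [hgCapp]
    show (t1 z : Z) + (ρ ((κ z : Y)) : Z) = (z : Z)
    rw [ht1app, sub_add_cancel]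
  have eCh2 : Function.RightInverse gC fC := by
    rintro ⟨k, y⟩
    have hκg : κ (gC (k, y)) = y := by
      apply Subtype.ext
      rw [hκapp, hgCapp]
      obtain ⟨hkr, hkc⟩ := (hKmem (k : Z)).mp k.2
      have hρval : ((ρ (y : Y) : ↥NC) : Z) = (T (0, (y : Y), 0)).2.2 := rfl
      have hv : B (T (0, (y : Y), 0)).2.1 + F (T (0, (y : Y), 0)).2.2 = (y : Y) :=
        hMT2 (0, (y : Y), 0)
      have hFw : F (T (0, (y : Y), 0)).2.2 = (y : Y) - B (T (0, (y : Y), 0)).2.1 :=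
        eq_sub_of_add_eq' hv
      have hBk : B (B' (F (k : Z))) = F (k : Z) := (hRB _).mp hkr
      have hy2 : B (B' (y : Y)) = 0 := y.2
      rw [hρval, map_add, hFw]
      simp only [map_add, map_sub]
      rw [hBk, hy2, hBB'B]
      abel
    refine Prod.ext ?_ hκg
    apply Subtype.ext
    show (t1 (gC (k, y)) : Z) = ((k, y).1 : Z)
    rw [ht1app, hκg, hgCapp]
    abel
  set eC : ↥NC ≃L[ℝ] ↥K × ↥Y2 :=
    ContinuousLinearEquiv.equivOfInverse fC gC eCh1 eCh2 with heCdef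
  -- ===== assoc : NB × (K × Y2) ≃L (NB × K) × Y2 =====
  set fA : ↥NB × (↥K × ↥Y2) →L[ℝ] (↥NB × ↥K) × ↥Y2 :=
    ((ContinuousLinearMap.fst ℝ ↥NB (↥K × ↥Y2)).prod
        ((ContinuousLinearMap.fst ℝ ↥K ↥Y2).comp
          (ContinuousLinearMap.snd ℝ ↥NB (↥K × ↥Y2)))).prod
      ((ContinuousLinearMap.snd ℝ ↥K ↥Y2).comp
        (ContinuousLinearMap.snd ℝ ↥NB (↥K × ↥Y2))) with hfAdef
  set gA : (↥NB × ↥K) × ↥Y2 →L[ℝ] ↥NB × (↥K × ↥Y2) :=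
    ((ContinuousLinearMap.fst ℝ ↥NB ↥K).comp
        (ContinuousLinearMap.fst ℝ (↥NB × ↥K) ↥Y2)).prod
      (((ContinuousLinearMap.snd ℝ ↥NB ↥K).comp
          (ContinuousLinearMap.fst ℝ (↥NB × ↥K) ↥Y2)).prod
        (ContinuousLinearMap.snd ℝ (↥NB × ↥K) ↥Y2)) with hgAdef
  set eA : (↥NB × (↥K × ↥Y2)) ≃L[ℝ] ((↥NB × ↥K) × ↥Y2) :=
    ContinuousLinearEquiv.equivOfInverse fA gA (fun p => rfl) (fun p => rfl) with heAdef
  -- ===== assemble =====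
  exact ⟨(((ContinuousLinearEquiv.refl ℝ ↥NB).prodCongr eC).trans eA).trans
    ((e3.prodCongr (ContinuousLinearEquiv.refl ℝ ↥Y2)).trans (e4.prodCongr e5))⟩
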